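/- Under the hypotheses of the resurfacing bound (L_u β-smooth, iterates w_{t+1} = w_t - η g_t with ‖g_t‖ ≤ G, average alignment (1/T)Σ_{t<T}⟨∇L_u(w_0), g_t⟩ ≥ ρ > 0), if additionally 1 ≤ T < 2ρ/(β η G²) with β, η, G > 0, then L_u(w_T) < L_u(w_0). -/

import Mathlib

open scoped RealInnerProductSpace

lemma descent_aux {d : ℕ} (L : EuclideanSpace ℝ (Fin d) → ℝ)
    (gradL : EuclideanSpace ℝ (Fin d) → EuclideanSpace ℝ (Fin d))
    (β : ℝ) (hβ : 0 ≤ β)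
    (hdiff : ∀ x, HasGradientAt L (gradL x) x)
    (hlip : ∀ x y, ‖gradL x - gradL y‖ ≤ β * ‖x - y‖)
    (x v : EuclideanSpace ℝ (Fin d)) :
    L (x + v) ≤ L x + ⟪gradL x, v⟫ + β / 2 * ‖v‖ ^ 2 := by
  have hcontg : Continuous gradL := by
    refine (LipschitzWith.of_dist_le_mul (K := β.toNNReal) fun a b => ?_).continuous
    simpa [dist_eq_norm, Real.coe_toNNReal β hβ] using hlip a b
  have hφ : ∀ t : ℝ, HasDerivAt (fun t : ℝ => L (x + t • v)) ⟪gradL (x + t • v), v⟫ t := by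
    intro t
    have h1 : HasDerivAt (fun t : ℝ => x + t • v) v t := by
      simpa using ((hasDerivAt_id t).smul_const v).const_add x
    have h2 := (hdiff (x + t • v)).hasFDerivAt.comp_hasDerivAt t h1
    simp at h2; exact h2
  have hcont : Continuous fun t : ℝ => ⟪gradL (x + t • v), v⟫ := by
    exact (hcontg.comp (by continuity)).inner continuous_const
  have hint : IntervalIntegrable (fun t : ℝ => ⟪gradL (x + t • v), v⟫)
      MeasureTheory.volume 0 1 := hcont.intervalIntegrable 0 1
  have key : L (x + v) - L x = ∫ t in (0:ℝ)..1, ⟪gradL (x + t • v), v⟫ := by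
    have := intervalIntegral.integral_eq_sub_of_hasDerivAt (f := fun t : ℝ => L (x + t • v))
      (fun t _ => hφ t) hint
    simpa using this.symm
  have hbound : (∫ t in (0:ℝ)..1, ⟪gradL (x + t • v), v⟫)
      ≤ ∫ t in (0:ℝ)..1, (⟪gradL x, v⟫ + β * ‖v‖ ^ 2 * t) := by
    refine intervalIntegral.integral_mono_on (by norm_num) hint ?_ ?_
    · exact Continuous.intervalIntegrable (by continuity) 0 1
    · intro t ht
      rcases ht with ⟨ht0, ht1⟩
      have h1 : ⟪gradL (x + t • v), v⟫ = ⟪gradL x, v⟫ + ⟪gradL (x + t • v) - gradL x, v⟫ := by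
        rw [inner_sub_left]; ring
      rw [h1]
      have h2 : ⟪gradL (x + t • v) - gradL x, v⟫ ≤ β * ‖v‖ ^ 2 * t := by
        calc ⟪gradL (x + t • v) - gradL x, v⟫ ≤ ‖gradL (x + t • v) - gradL x‖ * ‖v‖ :=
              real_inner_le_norm _ _
          _ ≤ (β * ‖x + t • v - x‖) * ‖v‖ := by
              have := hlip (x + t • v) x
              exact mul_le_mul_of_nonneg_right this (norm_nonneg _)
          _ = β * ‖v‖ ^ 2 * t := by
              have : ‖x + t • v - x‖ = t * ‖v‖ := by
                simp [norm_smul, abs_of_nonneg ht0]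
              rw [this]; ring
      linarith
  have hval : (∫ t in (0:ℝ)..1, (⟪gradL x, v⟫ + β * ‖v‖ ^ 2 * t))
      = ⟪gradL x, v⟫ + β / 2 * ‖v‖ ^ 2 := by
    rw [intervalIntegral.integral_add intervalIntegrable_const
      ((Continuous.intervalIntegrable (by continuity : Continuous fun t : ℝ => β * ‖v‖ ^ 2 * t) 0 1)),
      intervalIntegral.integral_const_mul, integral_id, intervalIntegral.integral_const]
    norm_num; ring
  linarith [key ▸ hbound, hval ▸ hbound]

set_option maxHeartbeats 1000000 in
theorem stmt_6 {d : ℕ} (L : EuclideanSpace ℝ (Fin d) → ℝ)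
    (gradL : EuclideanSpace ℝ (Fin d) → EuclideanSpace ℝ (Fin d))
    (β η G ρ : ℝ) (hβ : 0 < β) (hη : 0 < η) (hG : 0 < G) (hρ : 0 < ρ)
    (hdiff : ∀ x, HasGradientAt L (gradL x) x)
    (hlip : ∀ x y, ‖gradL x - gradL y‖ ≤ β * ‖x - y‖)
    (g w : ℕ → EuclideanSpace ℝ (Fin d))
    (hg : ∀ t, ‖g t‖ ≤ G)
    (hw : ∀ t, w (t + 1) = w t - η • g t)
    (T : ℕ) (hT : 1 ≤ T) (hTwin : (T : ℝ) < 2 * ρ / (β * η * G ^ 2))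
    (halign : ρ ≤ (1 / (T : ℝ)) * ∑ t ∈ Finset.range T, ⟪gradL (w 0), g t⟫) :
    L (w T) < L (w 0) := by
  set S : EuclideanSpace ℝ (Fin d) := ∑ t ∈ Finset.range T, g t with hS
  have hwT : w T = w 0 + (-η) • S := by
    have : ∀ n, w n = w 0 + (-η) • ∑ t ∈ Finset.range n, g t := by
      intro n
      induction n with
      | zero => simp
      | succ n ih =>
        rw [hw n, ih, Finset.sum_range_succ, smul_add, neg_smul, neg_smul]
        abel
    exact this T
  have hdesc := descent_aux L gradL β hβ.le hdiff hlip (w 0) ((-η) • S)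
  rw [← hwT] at hdesc
  have hTpos : (0:ℝ) < T := by exact_mod_cast hT
  have hsum : (T : ℝ) * ρ ≤ ∑ t ∈ Finset.range T, ⟪gradL (w 0), g t⟫ := by
    have h := mul_le_mul_of_nonneg_left halign hTpos.le
    calc (T:ℝ) * ρ ≤ (T:ℝ) * (1 / (T:ℝ) * ∑ t ∈ Finset.range T, ⟪gradL (w 0), g t⟫) := by
          nlinarith
      _ = _ := by field_simp
  have hinner : ⟪gradL (w 0), (-η) • S⟫ ≤ -(η * (T * ρ)) := by
    rw [inner_smul_right, hS, inner_sum]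
    have := mul_le_mul_of_nonneg_left hsum hη.le
    nlinarith
  have hnormS : ‖S‖ ≤ T * G := by
    calc ‖S‖ ≤ ∑ t ∈ Finset.range T, ‖g t‖ := norm_sum_le _ _
      _ ≤ ∑ _t ∈ Finset.range T, G := Finset.sum_le_sum fun t _ => hg t
      _ = T * G := by simp [mul_comm]
  have hnormsq : ‖(-η) • S‖ ^ 2 ≤ η ^ 2 * (T * G) ^ 2 := by
    rw [norm_smul]
    have h1 : ‖S‖ ^ 2 ≤ (T * G) ^ 2 := by
      apply sq_le_sq' (by nlinarith [norm_nonneg S]) hnormS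
    calc (‖(-η : ℝ)‖ * ‖S‖) ^ 2 = η ^ 2 * ‖S‖ ^ 2 := by
          rw [mul_pow]; simp [abs_of_pos hη, sq_abs]
      _ ≤ η ^ 2 * (T * G) ^ 2 := by nlinarith
  -- final arithmetic
  have hfin : -(η * (T * ρ)) + β / 2 * (η ^ 2 * (T * G) ^ 2) < 0 := by
    have hden : 0 < β * η * G ^ 2 := by positivity
    rw [lt_div_iff₀ hden] at hTwin
    have hkey : 0 < η * T * (2 * ρ - T * (β * η * G ^ 2)) :=
      mul_pos (mul_pos hη hTpos) (by linarith)
    nlinarith [hkey]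
  have : L (w T) ≤ L (w 0) + ⟪gradL (w 0), (-η) • S⟫ + β / 2 * ‖(-η) • S‖ ^ 2 := hdesc
  nlinarith [this, hinner, hnormsq, hβ.le]
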